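/- Let ι be a finite type, let c r : ℤ, let f : ι → ℤ → ℤ be a family such that for each ρ there exists N : ℕ with f ρ j = r for all j ≤ -(N : ℤ) and f ρ j = 0 for all j ≥ (N : ℤ), and let a : ι → ℤ satisfy ∑ ρ, a ρ = 0. Then ∑ ρ, c * ∑ᶠ (j : ℤ), j * (f ρ (j - a ρ) - f ρ (j - a ρ + 1)) = ∑ ρ, c * ∑ᶠ (j : ℤ), j * (f ρ j - f ρ (j + 1)). -/

import Mathlib

open Function

/-- Telescoping sum over an integer interval. -/
lemma tele_sum (f : ℤ → ℤ) (L : ℤ) : ∀ U : ℤ, L - 1 ≤ U →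
    ∑ j ∈ Finset.Icc L U, (f j - f (j + 1)) = f L - f (U + 1) := by
  intro U hU
  refine Int.le_induction (motive := fun U _ =>
    ∑ j ∈ Finset.Icc L U, (f j - f (j + 1)) = f L - f (U + 1)) ?_ ?_ U hU
  · have h : Finset.Icc L (L - 1) = ∅ := by
      apply Finset.Icc_eq_empty; omega
    simp [h]
  · intro n hn ih
    have hins : Finset.Icc L (n + 1) = insert (n + 1) (Finset.Icc L n) := by
      ext x; simp only [Finset.mem_Icc, Finset.mem_insert]; omega
    rw [hins, Finset.sum_insert (by simp [Finset.mem_Icc]), ih]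
    ring

/-- Single-ray shift formula. -/
lemma single_shift (r : ℤ) (f : ℤ → ℤ) (N : ℕ)
    (h1 : ∀ j : ℤ, j ≤ -(N : ℤ) → f j = r) (h2 : ∀ j : ℤ, (N : ℤ) ≤ j → f j = 0) (a : ℤ) :
    ∑ᶠ j : ℤ, j * (f (j - a) - f (j - a + 1)) =
      a * r + ∑ᶠ j : ℤ, j * (f j - f (j + 1)) := by
  have hdiff : ∀ j : ℤ, f j - f (j + 1) ≠ 0 → j ∈ (Finset.Icc (-(N : ℤ)) (N : ℤ) : Set ℤ) := by
    intro j hj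
    simp only [Finset.coe_Icc, Set.mem_Icc]
    by_contra h
    push_neg at h
    apply hj
    rcases le_or_gt j (-(N : ℤ) - 1) with hle | hgt
    · rw [h1 j (by omega), h1 (j + 1) (by omega)]; ring
    · have hN : (N : ℤ) ≤ j := by
        rcases le_or_gt (-(N : ℤ)) j with h' | h'
        · exact (h h').le
        · omega
      rw [h2 j hN, h2 (j + 1) (by omega)]; ring
  have hfin1 : (support fun j : ℤ => j * (f j - f (j + 1))).Finite := by
    apply Set.Finite.subset (Finset.Icc (-(N : ℤ)) (N : ℤ)).finite_toSet
    intro j hj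
    exact hdiff j fun h => hj (by simp [support, h])
  have hfin2 : (support fun j : ℤ => a * (f j - f (j + 1))).Finite := by
    apply Set.Finite.subset (Finset.Icc (-(N : ℤ)) (N : ℤ)).finite_toSet
    intro j hj
    exact hdiff j fun h => hj (by simp [support, h])
  have hsub3 : (support fun j : ℤ => f j - f (j + 1)) ⊆
      (Finset.Icc (-(N : ℤ)) (N : ℤ) : Set ℤ) := fun j hj => hdiff j hj
  have hfin3 : (support fun j : ℤ => f j - f (j + 1)).Finite :=
    Set.Finite.subset (Finset.Icc (-(N : ℤ)) (N : ℤ)).finite_toSet hsub3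
  -- reindex: j ↦ j - a is Equiv.subRight a
  have key : ∑ᶠ j : ℤ, j * (f (j - a) - f (j - a + 1)) =
      ∑ᶠ k : ℤ, (k + a) * (f k - f (k + 1)) := by
    have := finsum_comp_equiv (Equiv.subRight a)
      (f := fun k : ℤ => (k + a) * (f k - f (k + 1)))
    rw [← this]
    apply finsum_congr
    intro j
    simp [Equiv.subRight, sub_add_cancel]
  rw [key]
  have split : ∀ k : ℤ, (k + a) * (f k - f (k + 1)) =
      k * (f k - f (k + 1)) + a * (f k - f (k + 1)) := by intro k; ring
  rw [finsum_congr split, finsum_add_distrib hfin1 hfin2, add_comm]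
  congr 1
  rw [← mul_finsum _ _]
  congr 1
  rw [finsum_eq_sum_of_support_subset _ hsub3]
  rw [tele_sum f (-(N : ℤ)) (N : ℤ) (by omega), h1 (-(N : ℤ)) (le_refl _),
    h2 ((N : ℤ) + 1) (by omega)]
  ring

/-- If each `f ρ : ℤ → ℤ` is eventually `r` at `-∞` and eventually `0` at `+∞`, and the
shifts `a ρ` sum to zero, then the total (weighted) degree of the shifted family equals
that of the original family. -/
theorem total_degree_shift_invariant {ι : Type*} [Fintype ι] (c r : ℤ) (f : ι → ℤ → ℤ)
    (hf : ∀ ρ : ι, ∃ N : ℕ,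
      (∀ j : ℤ, j ≤ -(N : ℤ) → f ρ j = r) ∧ (∀ j : ℤ, (N : ℤ) ≤ j → f ρ j = 0))
    (a : ι → ℤ) (ha : ∑ ρ, a ρ = 0) :
    ∑ ρ, c * ∑ᶠ j : ℤ, j * (f ρ (j - a ρ) - f ρ (j - a ρ + 1)) =
      ∑ ρ, c * ∑ᶠ j : ℤ, j * (f ρ j - f ρ (j + 1)) := by
  have step : ∀ ρ : ι, c * ∑ᶠ j : ℤ, j * (f ρ (j - a ρ) - f ρ (j - a ρ + 1)) =
      c * (a ρ * r) + c * ∑ᶠ j : ℤ, j * (f ρ j - f ρ (j + 1)) := by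
    intro ρ
    obtain ⟨N, h1, h2⟩ := hf ρ
    rw [single_shift r (f ρ) N h1 h2 (a ρ), mul_add]
  rw [Finset.sum_congr rfl (fun ρ _ => step ρ), Finset.sum_add_distrib]
  have hz : ∑ ρ, c * (a ρ * r) = 0 := by
    have : ∑ ρ, c * (a ρ * r) = (c * r) * ∑ ρ, a ρ := by
      rw [Finset.mul_sum]
      apply Finset.sum_congr rfl
      intro ρ _; ring
    rw [this, ha, mul_zero]
  rw [hz, zero_add]
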